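/- There exist closed sets A ⊆ ℝ and B ⊆ ℝ such that neither A nor B is σ-lower porous in ℝ, yet the Cartesian product A × B is lower porous in ℝ² equipped with the maximum metric. -/

import Mathlib

open Metric Filter Set

/-- γ(x,R,M): the supremum of radii r>0 of open balls contained in B(x,R) \ M
(equal to 0 if no such ball exists, by `Real.sSup_empty`). -/
noncomputable def porGamma {X : Type*} [MetricSpace X] (x : X) (R : ℝ) (M : Set X) : ℝ :=
  sSup {r : ℝ | 0 < r ∧ ∃ z : X, Metric.ball z r ⊆ Metric.ball x R \ M}

/-- `M` is lower porous at `x`: liminf_{R→0+} 2γ(x,R,M)/R > 0. -/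
def LowerPorousAt {X : Type*} [MetricSpace X] (M : Set X) (x : X) : Prop :=
  0 < Filter.liminf (fun R => 2 * porGamma x R M / R) (nhdsWithin 0 (Set.Ioi 0))

/-- `M` is (upper) porous at `x`: limsup_{R→0+} 2γ(x,R,M)/R > 0. -/
def UpperPorousAt {X : Type*} [MetricSpace X] (M : Set X) (x : X) : Prop :=
  0 < Filter.limsup (fun R => 2 * porGamma x R M / R) (nhdsWithin 0 (Set.Ioi 0))

/-- A set is lower porous if it is lower porous at each of its points. -/
def LowerPorous {X : Type*} [MetricSpace X] (M : Set X) : Prop :=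
  ∀ x ∈ M, LowerPorousAt M x

/-- A set is (upper) porous if it is porous at each of its points. -/
def UpperPorous {X : Type*} [MetricSpace X] (M : Set X) : Prop :=
  ∀ x ∈ M, UpperPorousAt M x

/-- A set is σ-lower porous if it is a countable union of lower porous sets. -/
def SigmaLowerPorous {X : Type*} [MetricSpace X] (A : Set X) : Prop :=
  ∃ f : ℕ → Set X, (∀ n, LowerPorous (f n)) ∧ A = ⋃ n, f n

/-- A set is σ-(upper) porous if it is a countable union of porous sets. -/
def SigmaUpperPorous {X : Type*} [MetricSpace X] (A : Set X) : Prop :=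
  ∃ f : ℕ → Set X, (∀ n, UpperPorous (f n)) ∧ A = ⋃ n, f n


namespace PorAux
open Topology

noncomputable section

/-- weight of digit `j` -/
def w (j : ℕ) : ℝ := (1/2 : ℝ) ^ (j+1)

lemma w_pos (j : ℕ) : 0 < w j := by unfold w; positivity

lemma summable_w : Summable w := by
  have h : Summable (fun j : ℕ => (1/2:ℝ)^j) :=
    summable_geometric_of_lt_one (by norm_num) (by norm_num)
  have := h.mul_right (1/2)
  refine this.congr (fun j => ?_)
  unfold w; rw [pow_succ]

lemma tsum_w_add (n : ℕ) : ∑' i : ℕ, w (i+n) = (1/2:ℝ)^n := by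
  have h : ∀ i : ℕ, w (i+n) = (1/2:ℝ)^i * ((1/2)^(n+1)) := by
    intro i; unfold w; rw [← pow_add]; ring_nf
  rw [tsum_congr h, tsum_mul_right, tsum_geometric_of_lt_one (by norm_num) (by norm_num)]
  rw [pow_succ]; norm_num; ring

/-- the `j`-th term of the masked sum -/
def trm (t ε : ℕ → Bool) (j : ℕ) : ℝ := if t j && ε j then w j else 0

lemma trm_nonneg (t ε : ℕ → Bool) (j : ℕ) : 0 ≤ trm t ε j := by
  unfold trm; split
  · exact (w_pos j).le
  · exact le_rfl

lemma trm_le_w (t ε : ℕ → Bool) (j : ℕ) : trm t ε j ≤ w j := by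
  unfold trm; split
  · exact le_rfl
  · exact (w_pos j).le

lemma summable_trm (t ε : ℕ → Bool) : Summable (trm t ε) :=
  Summable.of_nonneg_of_le (trm_nonneg t ε) (trm_le_w t ε) summable_w

/-- the masked binary sum -/
def g (t ε : ℕ → Bool) : ℝ := ∑' j, trm t ε j

/-- partial (prefix) sum -/
def gP (t p : ℕ → Bool) (n : ℕ) : ℝ := ∑ j ∈ Finset.range n, trm t p j

lemma g_split (t ε : ℕ → Bool) (n : ℕ) :
    g t ε = gP t ε n + ∑' i : ℕ, trm t ε (i+n) :=
  (Summable.sum_add_tsum_nat_add n (summable_trm t ε)).symm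

lemma tail_nonneg (t ε : ℕ → Bool) (n : ℕ) : 0 ≤ ∑' i : ℕ, trm t ε (i+n) :=
  tsum_nonneg (fun i => trm_nonneg t ε (i+n))

lemma tail_le (t ε : ℕ → Bool) (n : ℕ) : ∑' i : ℕ, trm t ε (i+n) ≤ (1/2:ℝ)^n := by
  rw [← tsum_w_add n]
  exact Summable.tsum_le_tsum (fun i => trm_le_w t ε (i+n))
    ((summable_nat_add_iff n).2 (summable_trm t ε)) ((summable_nat_add_iff n).2 summable_w)

lemma g_mem (t ε : ℕ → Bool) (n : ℕ) :
    gP t ε n ≤ g t ε ∧ g t ε ≤ gP t ε n + (1/2:ℝ)^n := by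
  rw [g_split t ε n]
  constructor
  · linarith [tail_nonneg t ε n]
  · linarith [tail_le t ε n]

lemma gP_congr (t ε p : ℕ → Bool) (n : ℕ) (h : ∀ j, j < n → ε j = p j) :
    gP t ε n = gP t p n := by
  unfold gP
  refine Finset.sum_congr rfl (fun j hj => ?_)
  rw [trm, trm, h j (Finset.mem_range.1 hj)]

lemma g_eq_gP (t ε : ℕ → Bool) (n : ℕ) (h : ∀ j, n ≤ j → ε j = false) :
    g t ε = gP t ε n := by
  rw [g_split t ε n]
  have : ∀ i : ℕ, trm t ε (i+n) = 0 := by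
    intro i; unfold trm; rw [h (i+n) (Nat.le_add_left n i)]; simp
  rw [tsum_congr this, tsum_zero, add_zero]

lemma gP_dyadic (t ε : ℕ → Bool) (n : ℕ) : ∃ q : ℕ, gP t ε n = q * (1/2:ℝ)^n := by
  induction n with
  | zero => exact ⟨0, by simp [gP]⟩
  | succ n ih =>
    obtain ⟨q, hq⟩ := ih
    rw [gP, Finset.sum_range_succ, ← gP, hq]
    by_cases h : (t n && ε n : Bool)
    · refine ⟨2*q+1, ?_⟩
      rw [trm, if_pos h]
      unfold w
      push_cast
      rw [pow_succ]; ring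
    · refine ⟨2*q, ?_⟩
      rw [trm, if_neg h]
      push_cast
      rw [pow_succ]; ring

/-- The Cantor-type set given by mask `t`. -/
def Atype (t : ℕ → Bool) : Set ℝ := Set.range (g t)

lemma Atype_nonneg {t : ℕ → Bool} {x : ℝ} (hx : x ∈ Atype t) : 0 ≤ x := by
  obtain ⟨ε, rfl⟩ := hx
  exact tsum_nonneg (trm_nonneg t ε)

lemma isClosed_Atype (t : ℕ → Bool) : IsClosed (Atype t) := by
  have hcont : Continuous (g t) := by
    apply continuous_tsum (u := w) (fun j => ?_) summable_w (fun j ε => ?_)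
    · exact (continuous_of_discreteTopology (α := Bool)
        (f := fun b => if t j && b then w j else 0)).comp (continuous_apply j)
    · rw [Real.norm_eq_abs, abs_of_nonneg (trm_nonneg t ε j)]
      exact trm_le_w t ε j
  exact (isCompact_range hcont).isClosed

lemma Atype_struct {t : ℕ → Bool} {j : ℕ} (hj : t j = false) {x : ℝ} (hx : x ∈ Atype t) :
    ∃ q : ℕ, (q:ℝ) * (1/2:ℝ)^j ≤ x ∧ x ≤ q * (1/2:ℝ)^j + (1/2:ℝ)^(j+1) := by
  obtain ⟨ε, rfl⟩ := hx
  obtain ⟨q, hq⟩ := gP_dyadic t ε j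
  have hstep : gP t ε (j+1) = gP t ε j := by
    rw [gP, Finset.sum_range_succ, ← gP, trm, hj]
    simp
  have h := g_mem t ε (j+1)
  exact ⟨q, by rw [← hq, ← hstep]; exact h.1, by rw [← hq, ← hstep]; exact h.2⟩

/-- the cylinder determined by prefix `p` of length `n` -/
def Cyl (t p : ℕ → Bool) (n : ℕ) : Set ℝ :=
  {x | ∃ ε : ℕ → Bool, (∀ j, j < n → ε j = p j) ∧ x = g t ε}

lemma cyl_subset_Atype (t p : ℕ → Bool) (n : ℕ) : Cyl t p n ⊆ Atype t := by
  rintro x ⟨ε, -, rfl⟩; exact ⟨ε, rfl⟩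

lemma cyl_zero (t p : ℕ → Bool) : Atype t ⊆ Cyl t p 0 := by
  rintro x ⟨ε, rfl⟩; exact ⟨ε, fun j hj => absurd hj (Nat.not_lt_zero j), rfl⟩

lemma cyl_incl (t : ℕ → Bool) {p p' : ℕ → Bool} {n n' : ℕ} (hnn : n ≤ n')
    (hagree : ∀ j, j < n → p' j = p j) : Cyl t p' n' ⊆ Cyl t p n := by
  rintro x ⟨ε, hε, rfl⟩
  exact ⟨ε, fun j hj => (hε j (lt_of_lt_of_le hj hnn)).trans (hagree j hj), rfl⟩

lemma cyl_bounds (t : ℕ → Bool) {p : ℕ → Bool} {n : ℕ} {x : ℝ} (hx : x ∈ Cyl t p n) :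
    gP t p n ≤ x ∧ x ≤ gP t p n + (1/2:ℝ)^n := by
  obtain ⟨ε, hε, rfl⟩ := hx
  have h := g_mem t ε n
  rw [gP_congr t ε p n hε] at h
  exact h

lemma cyl_base_mem (t : ℕ → Bool) {p : ℕ → Bool} {n : ℕ} (hp : ∀ j, n ≤ j → p j = false) :
    gP t p n ∈ Cyl t p n :=
  ⟨p, fun _ _ => rfl, (g_eq_gP t p n hp).symm⟩

lemma gP_ext (t : ℕ → Bool) {p : ℕ → Bool} {n n' : ℕ} (hnn : n ≤ n')
    (hp : ∀ j, n ≤ j → p j = false) : gP t p n' = gP t p n := by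
  unfold gP
  refine (Finset.sum_subset (Finset.range_subset_range.2 hnn) (fun j hj hnj => ?_)).symm
  rw [trm, hp j (le_of_not_gt (fun h => hnj (Finset.mem_range.2 h)))]
  simp

/-- Grid lemma: inside a free run all dyadic grid points are prefix sums. -/
lemma grid (t : ℕ → Bool) : ∀ (L n : ℕ) (p : ℕ → Bool), (∀ j, n ≤ j → p j = false) →
    (∀ j, n ≤ j → j < n + L → t j = true) → ∀ m : ℕ, m < 2^L →
    ∃ p' : ℕ → Bool, (∀ j, j < n → p' j = p j) ∧ (∀ j, n + L ≤ j → p' j = false) ∧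
      gP t p' (n+L) = gP t p n + m * (1/2:ℝ)^(n+L) := by
  intro L
  induction L with
  | zero =>
    intro n p hp ht m hm
    have : m = 0 := Nat.lt_one_iff.1 hm
    subst this
    exact ⟨p, fun _ _ => rfl, fun j hj => hp j (by omega), by simp⟩
  | succ L IH =>
    intro n p hp ht m hm
    have hkey : (1/2:ℝ)^(n+1) = (2:ℝ)^L * (1/2)^(n+1+L) := by
      have h1 : ((2:ℝ))^L * (1/2)^L = 1 := by rw [← mul_pow]; norm_num
      rw [pow_add (1/2:ℝ) (n+1) L, mul_comm ((1/2:ℝ)^(n+1)), ← mul_assoc, h1, one_mul]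
    by_cases hc : m < 2^L
    · obtain ⟨p', h1, h2, h3⟩ := IH (n+1) p (fun j hj => hp j (by omega))
        (fun j hj1 hj2 => ht j (by omega) (by omega)) m hc
      have hgp : gP t p (n+1) = gP t p n := by
        rw [gP, Finset.sum_range_succ, ← gP, trm, hp n le_rfl]
        simp
      have he : n + 1 + L = n + (L+1) := by omega
      rw [he] at h3 h2
      exact ⟨p', fun j hj => h1 j (by omega), h2, by rw [h3, hgp]⟩
    · set q := Function.update p n true with hq
      have hqp : ∀ j, j < n → q j = p j := fun j hj =>
        Function.update_of_ne (by omega) _ _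
      obtain ⟨p', h1, h2, h3⟩ := IH (n+1) q
        (fun j hj => by rw [hq, Function.update_of_ne (by omega)]; exact hp j (by omega))
        (fun j hj1 hj2 => ht j (by omega) (by omega)) (m - 2^L) (by omega)
      have hgq : gP t q (n+1) = gP t p n + (1/2:ℝ)^(n+1) := by
        rw [gP, Finset.sum_range_succ, ← gP, gP_congr t q p n hqp, trm,
          ht n le_rfl (by omega), hq, Function.update_self]
        simp [w]
      have he : n + 1 + L = n + (L+1) := by omega
      rw [he] at h3 h2
      refine ⟨p', fun j hj => (h1 j (by omega)).trans (hqp j hj), h2, ?_⟩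
      rw [h3, hgq, hkey]
      have hcast : ((m - 2^L : ℕ) : ℝ) = (m:ℝ) - 2^L := by
        push_cast [Nat.cast_sub (le_of_not_gt hc)]
        ring
      rw [hcast, ← he]
      ring

/-- The hole lemma: at a scale where the mask forces the digit to 0, there are holes. -/
lemma hole (t : ℕ → Bool) (j : ℕ) (hj : t j = false) {a R : ℝ} (ha : a ∈ Atype t)
    (hR : (1/2:ℝ)^j ≤ R) :
    ∃ mid : ℝ, ball mid ((1/2:ℝ)^(j+2)) ⊆ ball a R \ Atype t := by
  obtain ⟨q, hq1, hq2⟩ := Atype_struct hj ha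
  set ρ := (1/2:ℝ)^(j+2) with hρ
  have hρpos : 0 < ρ := by positivity
  have f1 : (1/2:ℝ)^(j+1) = 2*ρ := by rw [hρ, pow_succ]; ring
  have f2 : (1/2:ℝ)^j = 4*ρ := by rw [hρ, pow_succ, pow_succ]; ring
  have hRpos : 0 < R := lt_of_lt_of_le (by positivity) hR
  refine ⟨q * (1/2:ℝ)^j + 3*ρ, ?_⟩
  intro y hy
  rw [mem_ball, Real.dist_eq, abs_lt] at hy
  have hy1 : q * (1/2:ℝ)^j + 2*ρ < y := by linarith [hy.1]
  have hy2 : y < q * (1/2:ℝ)^j + 4*ρ := by linarith [hy.2]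
  constructor
  · rw [mem_ball, Real.dist_eq, abs_lt]
    constructor
    · -- y - a > -R, i.e. y > a - R; in fact y > a
      have : a ≤ q * (1/2:ℝ)^j + 2*ρ := by rw [← f1]; exact hq2
      linarith
    · -- y < a + R
      have : q * (1/2:ℝ)^j + 4*ρ ≤ a + R := by
        rw [← f2]; linarith [hq1, hR]
      linarith
  · intro hy'
    obtain ⟨q', hq1', hq2'⟩ := Atype_struct hj hy'
    have hqq : (q':ℝ) ≤ q := by
      have h4 : (q':ℝ) * (1/2:ℝ)^j < (q+1) * (1/2:ℝ)^j := by
        rw [← f2] at hy2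
        nlinarith [hq1', hy2]
      have : (q':ℝ) < q + 1 := by
        have hp : (0:ℝ) < (1/2:ℝ)^j := by positivity
        exact lt_of_mul_lt_mul_right (by linarith [h4]) hp.le
      exact_mod_cast Nat.lt_succ_iff.1 (by exact_mod_cast this)
    have : y ≤ q * (1/2:ℝ)^j + 2*ρ := by
      rw [← f1]
      calc y ≤ q' * (1/2:ℝ)^j + (1/2:ℝ)^(j+1) := hq2'
        _ ≤ q * (1/2:ℝ)^j + (1/2:ℝ)^(j+1) := by
            have hp : (0:ℝ) ≤ (1/2:ℝ)^j := by positivity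
            nlinarith [hqq]
    linarith

/-- In `ℝ`, a ball of radius `r` inside a ball of radius `R` forces `r ≤ R`. -/
lemma real_radius_le {z x r R : ℝ} (hr : 0 < r) (h : ball z r ⊆ ball x R) : r ≤ R := by
  rw [Real.ball_eq_Ioo, Real.ball_eq_Ioo] at h
  have := (Set.Ioo_subset_Ioo_iff (by linarith)).1 h
  linarith [this.1, this.2]

lemma prod_radius_le {z x : ℝ × ℝ} {r R : ℝ} (hr : 0 < r) (h : ball z r ⊆ ball x R) :
    r ≤ R := by
  rw [← ball_prod_same, ← ball_prod_same] at h
  have h1 : ball z.1 r ⊆ ball x.1 R := fun y hy =>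
    (h (Set.mk_mem_prod hy (mem_ball_self hr))).1
  exact real_radius_le hr h1

lemma porGamma_nonneg {X : Type*} [MetricSpace X] (x : X) (R : ℝ) (M : Set X) :
    0 ≤ porGamma x R M :=
  Real.sSup_nonneg (fun r hr => hr.1.le)

lemma porGamma_le_prod (x : ℝ × ℝ) (R : ℝ) (hR : 0 ≤ R) (M : Set (ℝ × ℝ)) :
    porGamma x R M ≤ R := by
  refine Real.sSup_le (fun r hr => ?_) hR
  exact prod_radius_le hr.1 (hr.2.choose_spec.trans diff_subset)

lemma porGamma_le_real (x : ℝ) (R : ℝ) (hR : 0 ≤ R) (M : Set ℝ) :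
    porGamma x R M ≤ R := by
  refine Real.sSup_le (fun r hr => ?_) hR
  exact real_radius_le hr.1 (hr.2.choose_spec.trans diff_subset)

lemma porGamma_ge_prod {x : ℝ × ℝ} {R r : ℝ} {M : Set (ℝ × ℝ)} (hr : 0 < r)
    (hmem : ∃ z, ball z r ⊆ ball x R \ M) : r ≤ porGamma x R M := by
  refine le_csSup ⟨R, fun s hs => ?_⟩ ⟨hr, hmem⟩
  exact prod_radius_le hs.1 (hs.2.choose_spec.trans diff_subset)

/-- The product of the two complementary Cantor-type sets is lower porous. -/
lemma lowerPorous_prod (t : ℕ → Bool) :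
    LowerPorous (Atype t ×ˢ Atype (fun j => !t j)) := by
  classical
  rintro ⟨a, b⟩ hab
  obtain ⟨ha, hb⟩ := hab
  unfold LowerPorousAt
  set M := Atype t ×ˢ Atype (fun j => !t j) with hM
  have hev : ∀ᶠ R in 𝓝[>] (0:ℝ), (1/4:ℝ) ≤ 2 * porGamma ((a,b) : ℝ × ℝ) R M / R := by
    filter_upwards [Ioo_mem_nhdsGT_of_mem (by norm_num : (0:ℝ) ∈ Ico (0:ℝ) 1)] with R hR
    obtain ⟨hR0, hR1⟩ := hR
    obtain ⟨j, hj1, hj2⟩ : ∃ j : ℕ, (1/2:ℝ)^j ≤ R ∧ R < 2*(1/2:ℝ)^j := by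
      have hex : ∃ n : ℕ, (1/2:ℝ)^n ≤ R := by
        obtain ⟨n, hn⟩ := exists_pow_lt_of_lt_one hR0 (by norm_num : (1/2:ℝ) < 1)
        exact ⟨n, hn.le⟩
      have hj1 : (1/2:ℝ)^(Nat.find hex) ≤ R := Nat.find_spec hex
      have hjpos : Nat.find hex ≠ 0 := by
        intro h0
        rw [h0] at hj1
        norm_num at hj1
        linarith
      obtain ⟨k, hk⟩ := Nat.exists_eq_succ_of_ne_zero hjpos
      have hlt := Nat.find_min hex (m := k) (by omega)
      push_neg at hlt
      refine ⟨Nat.find hex, hj1, ?_⟩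
      rw [hk, pow_succ]
      linarith
    have key : ∃ z : ℝ × ℝ, ball z ((1/2:ℝ)^(j+2)) ⊆ ball ((a,b) : ℝ × ℝ) R \ M := by
      have hρR : (1/2:ℝ)^(j+2) ≤ R := by
        have : (1/2:ℝ)^(j+2) ≤ (1/2:ℝ)^j :=
          pow_le_pow_of_le_one (by norm_num) (by norm_num) (by omega)
        linarith
      have hρpos : (0:ℝ) < (1/2:ℝ)^(j+2) := by positivity
      cases hcase : t j with
      | false =>
        obtain ⟨mid, hm⟩ := hole t j hcase ha hj1
        refine ⟨(mid, b), ?_⟩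
        rintro ⟨y1, y2⟩ hy
        rw [← ball_prod_same] at hy
        constructor
        · rw [← ball_prod_same]
          exact ⟨(hm hy.1).1, ball_subset_ball hρR hy.2⟩
        · rintro ⟨hyA, -⟩
          exact (hm hy.1).2 hyA
      | true =>
        obtain ⟨mid, hm⟩ := hole (fun i => !t i) j (by simp [hcase]) hb hj1
        refine ⟨(a, mid), ?_⟩
        rintro ⟨y1, y2⟩ hy
        rw [← ball_prod_same] at hy
        constructor
        · rw [← ball_prod_same]
          exact ⟨ball_subset_ball hρR hy.1, (hm hy.2).1⟩
        · rintro ⟨-, hyB⟩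
          exact (hm hy.2).2 hyB
    have hγ : (1/2:ℝ)^(j+2) ≤ porGamma ((a,b) : ℝ × ℝ) R M :=
      porGamma_ge_prod (by positivity) key
    rw [le_div_iff₀ hR0]
    have e : (1/2:ℝ)^(j+2) = (1/2:ℝ)^j * (1/4) := by rw [pow_succ, pow_succ]; ring
    nlinarith [hγ, hj2, hj1]
  have hcb : IsCoboundedUnder (· ≥ ·) (𝓝[>] (0:ℝ))
      (fun R => 2 * porGamma ((a,b) : ℝ × ℝ) R M / R) := by
    refine isCoboundedUnder_ge_of_eventually_le (𝓝[>] (0:ℝ)) (x := 2) ?_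
    filter_upwards [self_mem_nhdsWithin] with R hR
    have hR0 : (0:ℝ) < R := hR
    rw [div_le_iff₀ hR0]
    linarith [porGamma_le_prod (a,b) R hR0.le M]
  calc (0:ℝ) < 1/4 := by norm_num
    _ ≤ _ := Filter.le_liminf_of_le hcb hev

/-- Main step: any uniformly porous set can be avoided by a subcylinder. -/
lemma unif_step {S : Set ℝ} {c δ : ℝ} (hc : 0 < c) (hδ : 0 < δ)
    (hS : ∀ x ∈ S, ∀ R : ℝ, 0 < R → R < δ → ∃ z : ℝ, ball z (c*R) ⊆ ball x R \ S)
    (t : ℕ → Bool) (hrun : ∀ N L : ℕ, ∃ n, N ≤ n ∧ ∀ j, n ≤ j → j < n + L → t j = true)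
    (p : ℕ → Bool) (n : ℕ) (hp : ∀ j, n ≤ j → p j = false) :
    ∃ (p' : ℕ → Bool) (n' : ℕ), n < n' ∧ (∀ j, n' ≤ j → p' j = false) ∧
      (∀ j, j < n → p' j = p j) ∧ Cyl t p' n' ⊆ Cyl t p n ∧ ∀ x ∈ Cyl t p' n', x ∉ S := by
  classical
  -- choose the length of the run
  obtain ⟨L, hL2, hL⟩ : ∃ L : ℕ, 2 ≤ L ∧ 6 ≤ c * 2^L := by
    obtain ⟨L₀, hL₀⟩ := pow_unbounded_of_one_lt (R := ℝ) (6/c) one_lt_two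
    refine ⟨max L₀ 2, le_max_right _ _, ?_⟩
    have h1 : (2:ℝ)^L₀ ≤ 2^(max L₀ 2) := pow_le_pow_right₀ one_le_two (le_max_left _ _)
    have h2 : 6/c < 2^(max L₀ 2) := lt_of_lt_of_le hL₀ h1
    rw [div_lt_iff₀ hc] at h2
    nlinarith
  -- choose the start of the run
  obtain ⟨N₀, hN₀⟩ := exists_pow_lt_of_lt_one hδ (by norm_num : (1/2:ℝ) < 1)
  obtain ⟨n₀, hn₀, htt⟩ := hrun (max (n+1) N₀) L
  have hnn₀ : n + 1 ≤ n₀ := le_trans (le_max_left _ _) hn₀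
  have hN₀n₀ : N₀ ≤ n₀ := le_trans (le_max_right _ _) hn₀
  obtain ⟨h, hhdef⟩ : ∃ y : ℝ, y = (1/2:ℝ)^n₀ := ⟨_, rfl⟩
  obtain ⟨β, hβdef⟩ : ∃ y : ℝ, y = (1/2:ℝ)^(n₀+L) := ⟨_, rfl⟩
  obtain ⟨c₀, hc₀def⟩ : ∃ y : ℝ, y = gP t p n₀ := ⟨_, rfl⟩
  have hhpos : 0 < h := by rw [hhdef]; positivity
  have hhδ : h < δ := by
    have : (1/2:ℝ)^n₀ ≤ (1/2:ℝ)^N₀ :=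
      pow_le_pow_of_le_one (by norm_num) (by norm_num) hN₀n₀
    rw [hhdef]; linarith
  have hβpos : 0 < β := by rw [hβdef]; positivity
  have hβh : β = h * (1/2:ℝ)^L := by rw [hβdef, hhdef, pow_add]
  have h2L : ((1/2:ℝ))^L * 2^L = 1 := by rw [← mul_pow]; norm_num
  have hcge : 6*(1/2:ℝ)^L ≤ c := by
    have hp2 : (0:ℝ) < (1/2:ℝ)^L := by positivity
    nlinarith [hL, h2L]
  have hβ4 : β ≤ h/4 := by
    have : (1/2:ℝ)^L ≤ (1/2:ℝ)^2 :=
      pow_le_pow_of_le_one (by norm_num) (by norm_num) hL2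
    rw [hβh]; nlinarith
  have hp₀ : ∀ j, n₀ ≤ j → p j = false := fun j hj => hp j (by omega)
  have hβ2L : (2:ℝ)^L * β = h := by
    rw [hβh, mul_comm h, ← mul_assoc, mul_comm ((2:ℝ)^L), h2L, one_mul]
  by_cases hcase : ∃ x ∈ S, x ∈ Icc (c₀ + h/4) (c₀ + h/2)
  · -- porosity of S produces a gap; find a grid interval inside it
    obtain ⟨s, hsS, hsIcc⟩ := hcase
    rw [mem_Icc] at hsIcc
    obtain ⟨hs1, hs2⟩ := hsIcc
    have hR0 : (0:ℝ) < h/4 := by linarith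
    obtain ⟨z, hz⟩ := hS s hsS (h/4) hR0 (by linarith)
    rw [Real.ball_eq_Ioo, Real.ball_eq_Ioo] at hz
    have hcR : (0:ℝ) < c*(h/4) := by positivity
    have hsub : Ioo (z - c*(h/4)) (z + c*(h/4)) ⊆ Ioo (s - h/4) (s + h/4) :=
      hz.trans diff_subset
    obtain ⟨he1, he2⟩ := (Set.Ioo_subset_Ioo_iff (by linarith)).1 hsub
    obtain ⟨u, hudef⟩ : ∃ y : ℝ, y = z - c*(h/4) - c₀ := ⟨_, rfl⟩
    have hu0 : 0 ≤ u := by rw [hudef]; linarith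
    obtain ⟨m, hkey1, hkey2⟩ : ∃ m : ℕ, u < m * β ∧ (m:ℝ) * β ≤ u + β := by
      refine ⟨⌊u / β⌋₊ + 1, ?_, ?_⟩
      · have hfl := Nat.lt_floor_add_one (u / β)
        rw [div_lt_iff₀ hβpos] at hfl
        push_cast
        linarith [hfl]
      · have hfl2 := Nat.floor_le (show (0:ℝ) ≤ u / β by positivity)
        have h5 : (⌊u/β⌋₊ : ℝ) * β ≤ u := (le_div_iff₀ hβpos).1 hfl2
        push_cast
        linarith
    have h2βcR : 2*β < 2*(c*(h/4)) := by
      have hp2 : (0:ℝ) < (1/2:ℝ)^L := by positivity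
      rw [hβh]
      nlinarith [hcge, hhpos]
    have hmβu : (m:ℝ)*β + β < u + 2*(c*(h/4)) := by linarith
    have hmlt : m < 2^L := by
      have hzcr : z + c*(h/4) ≤ c₀ + 3*(h/4) := by linarith
      have hu2 : u + 2*(c*(h/4)) = z + c*(h/4) - c₀ := by rw [hudef]; ring
      have hm34 : (m:ℝ)*β < 3*(h/4) := by linarith
      have hfin : (m:ℝ) < (2:ℝ)^L := by
        refine lt_of_mul_lt_mul_right ?_ hβpos.le
        rw [hβ2L]
        linarith
      exact_mod_cast hfin
    obtain ⟨p', h1, h2, h3⟩ := grid t L n₀ p hp₀ htt m hmlt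
    rw [← hβdef, ← hc₀def] at h3
    refine ⟨p', n₀+L, by omega, h2, fun j hj => h1 j (by omega),
      cyl_incl t (by omega) (fun j hj => h1 j (by omega)), ?_⟩
    intro x hx hxS
    obtain ⟨hb1, hb2⟩ := cyl_bounds t hx
    rw [h3] at hb1 hb2
    rw [← hβdef] at hb2
    have hx1 : z - c*(h/4) < x := by
      have he : c₀ + u = z - c*(h/4) := by rw [hudef]; ring
      linarith [hkey1]
    have hx2 : x < z + c*(h/4) := by
      have he : u + 2*(c*(h/4)) + c₀ = z + c*(h/4) := by rw [hudef]; ring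
      linarith [hmβu]
    exact (hz ⟨hx1, hx2⟩).2 hxS
  · -- the middle interval is free of S: take the grid point at c₀ + h/4
    push_neg at hcase
    have hm : 2^(L-2) < 2^L := Nat.pow_lt_pow_right (by norm_num) (by omega)
    obtain ⟨p', h1, h2, h3⟩ := grid t L n₀ p hp₀ htt (2^(L-2)) hm
    rw [← hβdef, ← hc₀def] at h3
    have hquarter : ((2^(L-2) : ℕ) : ℝ) * β = h/4 := by
      have e : (L-2)+2 = L := by omega
      have hcan : (2:ℝ)^(L-2) * (1/2:ℝ)^(L-2) = 1 := by rw [← mul_pow]; norm_num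
      have hβh' : β = h * (1/2:ℝ)^((L-2)+2) := by rw [e]; exact hβh
      rw [hβh', pow_add]
      push_cast
      linear_combination (h/4) * hcan
    rw [hquarter] at h3
    refine ⟨p', n₀+L, by omega, h2, fun j hj => h1 j (by omega),
      cyl_incl t (by omega) (fun j hj => h1 j (by omega)), ?_⟩
    intro x hx hxS
    obtain ⟨hb1, hb2⟩ := cyl_bounds t hx
    rw [h3] at hb1 hb2
    rw [← hβdef] at hb2
    refine hcase x hxS (mem_Icc.2 ⟨hb1, ?_⟩)
    linarith [hβ4, hb2]

/-- extraction of uniform porosity at a point of a lower porous set -/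
lemma exists_unif {P : Set ℝ} {x : ℝ} (hx : x ∈ P) (hlp : LowerPorousAt P x) :
    ∃ k : ℕ, ∀ R : ℝ, 0 < R → R < ((k:ℝ)+1)⁻¹ →
      ∃ z : ℝ, ball z (((k:ℝ)+1)⁻¹ * R) ⊆ ball x R \ P := by
  classical
  set u : ℝ → ℝ := fun R => 2 * porGamma x R P / R with hu
  have hl : 0 < liminf u (𝓝[>] (0:ℝ)) := hlp
  have hbdd : IsBoundedUnder (· ≥ ·) (𝓝[>] (0:ℝ)) u := by
    refine ⟨0, ?_⟩
    rw [eventually_map]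
    filter_upwards [self_mem_nhdsWithin] with R hR
    have hR0 : (0:ℝ) < R := hR
    have := porGamma_nonneg x R P
    positivity
  have hev := Filter.eventually_lt_of_lt_liminf
    (show liminf u (𝓝[>] (0:ℝ)) / 2 < liminf u (𝓝[>] (0:ℝ)) by linarith) hbdd
  set ℓ := liminf u (𝓝[>] (0:ℝ)) with hℓ
  obtain ⟨δ, hδ0, hδ⟩ := Metric.mem_nhdsWithin_iff.1 hev
  have hunif : ∀ R : ℝ, 0 < R → R < δ → ∃ z : ℝ, ball z ((ℓ/8) * R) ⊆ ball x R \ P := by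
    intro R hR0 hRδ
    have hmem : R ∈ ball (0:ℝ) δ ∩ Ioi 0 := by
      constructor
      · rw [mem_ball, Real.dist_eq, sub_zero, abs_of_pos hR0]; exact hRδ
      · exact hR0
    have hlt : ℓ/2 < u R := hδ hmem
    have hγ : ℓ/4 * R < porGamma x R P := by
      rw [hu] at hlt
      simp only at hlt
      rw [lt_div_iff₀ hR0] at hlt
      linarith
    have hne : {r : ℝ | 0 < r ∧ ∃ z : ℝ, ball z r ⊆ ball x R \ P}.Nonempty := by
      by_contra hcon
      rw [not_nonempty_iff_eq_empty] at hcon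
      have : porGamma x R P = 0 := by rw [porGamma, hcon, Real.sSup_empty]
      nlinarith [hγ]
    obtain ⟨r, hrmem, hrlt⟩ := exists_lt_of_lt_csSup hne
      (show ℓ/8 * R < porGamma x R P by nlinarith)
    exact ⟨hrmem.2.choose, (ball_subset_ball hrlt.le).trans hrmem.2.choose_spec⟩
  obtain ⟨k, hk⟩ := exists_nat_gt (max (8/ℓ) δ⁻¹)
  refine ⟨k, fun R hR0 hRk => ?_⟩
  have hk1 : ((k:ℝ)+1)⁻¹ < min (ℓ/8) δ := by
    have hmin : (0:ℝ) < min (ℓ/8) δ := lt_min (by linarith) hδ0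
    have hinvlt : (min (ℓ/8) δ)⁻¹ < (k:ℝ)+1 := by
      have hle : (min (ℓ/8) δ)⁻¹ ≤ max (8/ℓ) δ⁻¹ := by
        rcases min_cases (ℓ/8) δ with ⟨heq, -⟩ | ⟨heq, -⟩
        · rw [heq]
          rw [inv_div]
          exact le_max_left _ _
        · rw [heq]; exact le_max_right _ _
      calc (min (ℓ/8) δ)⁻¹ ≤ max (8/ℓ) δ⁻¹ := hle
        _ < k := hk
        _ < (k:ℝ)+1 := lt_add_one _
    have := inv_strictAnti₀ (inv_pos.2 hmin) hinvlt
    rwa [inv_inv] at this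
  obtain ⟨z, hz⟩ := hunif R hR0 (lt_trans hRk (lt_of_lt_of_le hk1 (min_le_right _ _)))
  refine ⟨z, (ball_subset_ball ?_).trans hz⟩
  have : ((k:ℝ)+1)⁻¹ ≤ ℓ/8 := le_of_lt (lt_of_lt_of_le hk1 (min_le_left _ _))
  nlinarith [hR0]

/-- The Cantor-type set of a mask with arbitrarily long free runs is not σ-lower porous. -/
lemma not_sigma (t : ℕ → Bool)
    (hrun : ∀ N L : ℕ, ∃ n, N ≤ n ∧ ∀ j, n ≤ j → j < n + L → t j = true) :
    ¬ SigmaLowerPorous (Atype t) := by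
  classical
  rintro ⟨f, hpor, hA⟩
  -- uniformly porous pieces
  set U : ℕ → ℕ → Set ℝ := fun n k =>
    {x | x ∈ f n ∧ ∀ R : ℝ, 0 < R → R < ((k:ℝ)+1)⁻¹ →
      ∃ z : ℝ, ball z (((k:ℝ)+1)⁻¹ * R) ⊆ ball x R \ f n} with hUdef
  have hUsub : ∀ n k, U n k ⊆ f n := fun n k x hx => hx.1
  have hUporous : ∀ n k, ∀ x ∈ U n k, ∀ R : ℝ, 0 < R → R < ((k:ℝ)+1)⁻¹ →
      ∃ z : ℝ, ball z (((k:ℝ)+1)⁻¹ * R) ⊆ ball x R \ U n k := by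
    intro n k x hx R h1 h2
    obtain ⟨z, hz⟩ := hx.2 R h1 h2
    exact ⟨z, hz.trans (diff_subset_diff_right (hUsub n k))⟩
  have hcover : ∀ x ∈ Atype t, ∃ n k, x ∈ U n k := by
    intro x hx
    rw [hA] at hx
    obtain ⟨n, hn⟩ := mem_iUnion.1 hx
    obtain ⟨k, hk⟩ := exists_unif hn (hpor n x hn)
    exact ⟨n, k, hn, hk⟩
  -- enumerate the pairs
  set e : ℕ → ℕ × ℕ := fun m => Nat.pairEquiv.symm m with hedef
  set S : ℕ → Set ℝ := fun m => U (e m).1 (e m).2 with hSdef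
  -- the inductive step
  have key : ∀ (q : (ℕ → Bool) × ℕ), (∀ j, q.2 ≤ j → q.1 j = false) → ∀ m : ℕ,
      ∃ q' : (ℕ → Bool) × ℕ, (∀ j, q'.2 ≤ j → q'.1 j = false) ∧ q.2 < q'.2 ∧
        (∀ j, j < q.2 → q'.1 j = q.1 j) ∧ Cyl t q'.1 q'.2 ⊆ Cyl t q.1 q.2 ∧
        ∀ x ∈ Cyl t q'.1 q'.2, x ∉ S m := by
    intro q hq m
    have hcpos : (0:ℝ) < (((e m).2 : ℝ)+1)⁻¹ := by positivity
    obtain ⟨p', n', hlt, hfalse, hagree, hincl, hdisj⟩ :=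
      unif_step hcpos hcpos (hUporous (e m).1 (e m).2) t hrun q.1 q.2 hq
    exact ⟨(p', n'), hfalse, hlt, hagree, hincl, hdisj⟩
  -- build the sequence
  let F : ℕ → {q : (ℕ → Bool) × ℕ // ∀ j, q.2 ≤ j → q.1 j = false} := fun m =>
    Nat.rec ⟨((fun _ => false), 0), fun j _ => rfl⟩
      (fun m q => ⟨(key q.1 q.2 m).choose, (key q.1 q.2 m).choose_spec.1⟩) m
  have hF : ∀ m : ℕ, (F m).1.2 < (F (m+1)).1.2 ∧
      (∀ j, j < (F m).1.2 → (F (m+1)).1.1 j = (F m).1.1 j) ∧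
      Cyl t (F (m+1)).1.1 (F (m+1)).1.2 ⊆ Cyl t (F m).1.1 (F m).1.2 ∧
      ∀ x ∈ Cyl t (F (m+1)).1.1 (F (m+1)).1.2, x ∉ S m := by
    intro m
    exact (key (F m).1 (F m).2 m).choose_spec.2
  have hmono : ∀ m m' : ℕ, m ≤ m' → (F m).1.2 ≤ (F m').1.2 := by
    intro m m' h
    induction h with
    | refl => exact le_rfl
    | step h ih => exact le_trans ih (le_of_lt (hF _).1)
  have hge : ∀ m : ℕ, m ≤ (F m).1.2 := by
    intro m
    induction m with
    | zero => exact Nat.zero_le _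
    | succ m ih => exact Nat.succ_le_of_lt (lt_of_le_of_lt ih (hF m).1)
  have hagree : ∀ m m' : ℕ, m ≤ m' → ∀ j, j < (F m).1.2 → (F m').1.1 j = (F m).1.1 j := by
    intro m m' h
    induction h with
    | refl => intro j hj; rfl
    | @step m'' h ih =>
      intro j hj
      rw [(hF m'').2.1 j (lt_of_lt_of_le hj (hmono _ _ h))]
      exact ih j hj
  set εs : ℕ → Bool := fun j => (F (j+1)).1.1 j with hεdef
  have hεagree : ∀ m : ℕ, ∀ j, j < (F m).1.2 → εs j = (F m).1.1 j := by
    intro m j hj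
    rcases le_total m (j+1) with hle | hle
    · exact hagree m (j+1) hle j hj
    · exact (hagree (j+1) m hle j (lt_of_lt_of_le (Nat.lt_succ_self j) (hge (j+1)))).symm
  have hxcyl : ∀ m : ℕ, g t εs ∈ Cyl t (F m).1.1 (F m).1.2 :=
    fun m => ⟨εs, fun j hj => hεagree m j hj, rfl⟩
  have hxS : ∀ m : ℕ, g t εs ∉ S m := fun m => (hF m).2.2.2 _ (hxcyl (m+1))
  obtain ⟨n, k, hnk⟩ := hcover (g t εs) ⟨εs, rfl⟩
  have : g t εs ∈ S (Nat.pairEquiv (n, k)) := by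
    rw [hSdef]
    simp only [hedef, Equiv.symm_apply_apply]
    exact hnk
  exact hxS _ this


end
/-- mask: levels in even dyadic blocks are free for `A` -/
def sMask (j : ℕ) : Bool := Nat.log 2 (j+1) % 2 == 0

lemma log_eq {i j : ℕ} (h1 : 2^i ≤ j+1) (h2 : j+1 < 2^(i+1)) : Nat.log 2 (j+1) = i :=
  Nat.log_eq_of_pow_le_of_lt_pow h1 h2

lemma run_mask : ∀ N L : ℕ, ∃ n, N ≤ n ∧ ∀ j, n ≤ j → j < n + L → sMask j = true := by
  intro N L
  set k := max N L with hk
  have hkN : N ≤ k := le_max_left _ _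
  have hkL : L ≤ k := le_max_right _ _
  have hpow : k < 2^k := Nat.lt_two_pow_self
  have hpow2 : 2^k ≤ 2^(2*k) := Nat.pow_le_pow_right (by norm_num) (by omega)
  refine ⟨2^(2*k) - 1, by omega, fun j hj1 hj2 => ?_⟩
  have hlog : Nat.log 2 (j+1) = 2*k := by
    refine log_eq (by omega) ?_
    have : 2^(2*k+1) = 2 * 2^(2*k) := by ring
    omega
  unfold sMask
  rw [hlog]
  simp [Nat.mul_mod_right]
lemma run_negmask : ∀ N L : ℕ, ∃ n, N ≤ n ∧ ∀ j, n ≤ j → j < n + L → (!sMask j) = true := by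
  intro N L
  set k := max N L with hk
  have hkN : N ≤ k := le_max_left _ _
  have hkL : L ≤ k := le_max_right _ _
  have hpow : k < 2^k := Nat.lt_two_pow_self
  have hpow2 : 2^k ≤ 2^(2*k+1) := Nat.pow_le_pow_right (by norm_num) (by omega)
  refine ⟨2^(2*k+1) - 1, by omega, fun j hj1 hj2 => ?_⟩
  have hlog : Nat.log 2 (j+1) = 2*k+1 := by
    refine log_eq (by omega) ?_
    have : 2^(2*k+1+1) = 2 * 2^(2*k+1) := by ring
    omega
  unfold sMask
  rw [hlog]
  simp [Nat.mul_add_mod]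

end PorAux

/-- There exist closed non-σ-lower porous sets `A, B ⊆ ℝ` whose product is lower
porous in `ℝ²` with the maximum metric. -/
theorem exists_closed_not_sigmaLowerPorous_prod_lowerPorous :
    ∃ A B : Set ℝ, IsClosed A ∧ IsClosed B ∧
      ¬ SigmaLowerPorous A ∧ ¬ SigmaLowerPorous B ∧ LowerPorous (A ×ˢ B) :=
  ⟨PorAux.Atype PorAux.sMask, PorAux.Atype (fun j => !PorAux.sMask j),
    PorAux.isClosed_Atype _, PorAux.isClosed_Atype _,
    PorAux.not_sigma _ PorAux.run_mask, PorAux.not_sigma _ PorAux.run_negmask,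
    PorAux.lowerPorous_prod _⟩
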